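/- Let k, q ≥ 1 and let c, d be real numbers. Let N be the (kq)×(kq) real matrix consisting of k×k blocks of size q×q, whose k diagonal blocks each equal c·I_q and whose off-diagonal blocks each equal d·J_q, where I_q is the q×q identity matrix and J_q is the q×q all-ones matrix. Then the characteristic polynomial of N is (X − (c + q(k−1)d)) · (X − (c − qd))^{k−1} · (X − c)^{k(q−1)}; that is, N has eigenvalues c + q(k−1)d, c − qd, and c with multiplicities 1, k−1, and k(q−1), respectively. -/

import Mathlib

open Polynomial Matrix

noncomputable def Cmat (k q : ℕ) : Matrix (Fin k × Fin q) (Fin k) ℝ :=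
  Matrix.of fun p j => if p.1 = j then 1 else 0

lemma Cmat_sandwich (k q : ℕ) (E : Matrix (Fin k) (Fin k) ℝ) (p p' : Fin k × Fin q) :
    (Cmat k q * E * (Cmat k q)ᵀ) p p' = E p.1 p'.1 := by
  simp [Cmat, Matrix.mul_apply, Matrix.transpose_apply, ite_mul, mul_ite,
    Finset.sum_ite_eq, Finset.sum_ite_eq']

lemma Cmat_gram (k q : ℕ) : (Cmat k q)ᵀ * Cmat k q = (q : ℝ) • 1 := by
  ext s t
  simp [Cmat, Matrix.mul_apply, Matrix.transpose_apply, Fintype.sum_prod_type,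
    Matrix.one_apply, ite_and, Finset.sum_ite_eq, Finset.sum_ite_eq']
  by_cases h : s = t
  · simp [h]
  · simp [h, Ne.symm h]

lemma eval_charpoly_eq_det {n : Type*} [Fintype n] [DecidableEq n]
    (M : Matrix n n ℝ) (x : ℝ) :
    (M.charpoly).eval x = (x • (1 : Matrix n n ℝ) - M).det := by
  rw [Matrix.charpoly, ← Polynomial.coe_evalRingHom, RingHom.map_det]
  congr 1
  ext i j
  by_cases h : i = j <;>
    simp [Matrix.charmatrix_apply, h, Matrix.one_apply, Matrix.diagonal_apply]

lemma det_point (k q : ℕ) (hk : 1 ≤ k) (hq : 1 ≤ q) (c d x : ℝ)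
    (h1 : x - c ≠ 0) (h2 : x - c + q * d ≠ 0) :
    (x • (1 : Matrix (Fin k × Fin q) (Fin k × Fin q) ℝ) -
      Matrix.of (fun p₁ p₂ : Fin k × Fin q =>
        if p₁.1 = p₂.1 then (if p₁.2 = p₂.2 then c else 0) else d)).det
      = (x - (c + (q : ℝ) * ((k : ℝ) - 1) * d)) *
        (x - (c - (q : ℝ) * d)) ^ (k - 1) * (x - c) ^ (k * (q - 1)) := by
  set t0 : ℝ := q * d / (x - c) with ht0
  set s0 : ℝ := 1 + t0 with hs0def
  have hxs : (x - c) * s0 = x - c + q * d := by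
    rw [hs0def, ht0]
    field_simp
  have hs0 : s0 ≠ 0 := by
    intro h
    rw [h, mul_zero] at hxs
    exact h2 hxs.symm
  have hxt : (x - c) * t0 = q * d := by rw [ht0]; field_simp
  set E : Matrix (Fin k) (Fin k) ℝ :=
    (d / (x - c)) • ((1 : Matrix (Fin k) (Fin k) ℝ) - Matrix.of fun _ _ => (1:ℝ)) with hE
  have stepA : x • (1 : Matrix (Fin k × Fin q) (Fin k × Fin q) ℝ) -
      Matrix.of (fun p₁ p₂ : Fin k × Fin q =>
        if p₁.1 = p₂.1 then (if p₁.2 = p₂.2 then c else 0) else d)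
      = (x - c) • (1 + Cmat k q * E * (Cmat k q)ᵀ) := by
    ext p p'
    have hsw := Cmat_sandwich k q E p p'
    rw [hE] at hsw
    simp only [Matrix.sub_apply, Matrix.smul_apply, Matrix.add_apply, hsw,
      Matrix.of_apply, Matrix.one_apply, hE, Matrix.smul_apply, Matrix.sub_apply,
      smul_eq_mul]
    by_cases h1' : p.1 = p'.1
    · by_cases h2' : p.2 = p'.2
      · have : p = p' := Prod.ext h1' h2'
        simp [this, Matrix.one_apply]
      · have : p ≠ p' := fun h => h2' (congrArg Prod.snd h)
        simp [this, h1', h2', Matrix.one_apply]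
    · have : p ≠ p' := fun h => h1' (congrArg Prod.fst h)
      simp [this, h1', Matrix.one_apply]
      field_simp
  rw [stepA, Matrix.det_smul]
  have card1 : Fintype.card (Fin k × Fin q) = k * q := by simp
  rw [card1]
  rw [Matrix.mul_assoc, Matrix.det_one_add_mul_comm (Cmat k q) (E * (Cmat k q)ᵀ)]
  have gram : E * (Cmat k q)ᵀ * Cmat k q = (q : ℝ) • E := by
    rw [Matrix.mul_assoc, Cmat_gram]
    ext s t; simp [mul_comm]
  rw [gram]
  set u : Fin k → ℝ := fun _ => -(t0 / s0) with hu
  set v : Fin k → ℝ := fun _ => (1:ℝ) with hv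
  have stepB : (1 : Matrix (Fin k) (Fin k) ℝ) + (q : ℝ) • E
      = s0 • (1 + Matrix.replicateCol Unit u * Matrix.replicateRow Unit v) := by
    ext s t
    simp only [Matrix.add_apply, Matrix.smul_apply, hE, Matrix.sub_apply,
      Matrix.one_apply, Matrix.of_apply, smul_eq_mul, Matrix.mul_apply,
      Matrix.replicateCol_apply, Matrix.replicateRow_apply, Finset.univ_unique, Finset.sum_singleton,
      hu, hv]
    by_cases h : s = t
    · simp [h]
      rw [mul_add, mul_neg, mul_div_cancel₀ _ hs0, hs0def]
      ring
    · simp [h]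
      rw [mul_div_cancel₀ _ hs0, ht0]
      field_simp
  rw [stepB, Matrix.det_smul, Matrix.det_one_add_replicateCol_mul_replicateRow]
  have hdot : v ⬝ᵥ u = (k : ℝ) * (-(t0 / s0)) := by
    simp [dotProduct, hu, hv, mul_comm]
  rw [hdot, Fintype.card_fin]
  have e1 : (x - c) ^ (k * q) = (x - c) ^ (k * (q - 1)) * ((x - c) ^ (k - 1) * (x - c)) := by
    rw [← pow_succ, ← pow_add]
    congr 1
    obtain ⟨k', rfl⟩ : ∃ k', k = k' + 1 := ⟨k - 1, by omega⟩
    obtain ⟨q', rfl⟩ : ∃ q', q = q' + 1 := ⟨q - 1, by omega⟩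
    simp [Nat.mul_succ]
  have e2 : s0 ^ k = s0 ^ (k - 1) * s0 := by
    rw [← pow_succ]
    congr 1
    omega
  rw [e1, e2]
  have key1 : (x - c) ^ (k - 1) * s0 ^ (k - 1) = (x - (c - q * d)) ^ (k - 1) := by
    rw [← mul_pow, hxs]
    ring_nf
  have key2 : (x - c) * (s0 * (1 + (k : ℝ) * (-(t0 / s0)))) =
      x - (c + (q : ℝ) * ((k : ℝ) - 1) * d) := by
    have : s0 * (1 + (k : ℝ) * (-(t0 / s0))) = s0 - k * t0 := by
      field_simp
      ring
    rw [this, mul_sub, hxs]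
    rw [show (x - c) * ((k:ℝ) * t0) = (k:ℝ) * ((x-c) * t0) by ring, hxt]
    ring
  calc (x - c) ^ (k * (q - 1)) * ((x - c) ^ (k - 1) * (x - c)) *
        (s0 ^ (k - 1) * s0 * (1 + (k:ℝ) * (-(t0 / s0))))
      = ((x - c) ^ (k - 1) * s0 ^ (k - 1)) *
        ((x - c) * (s0 * (1 + (k:ℝ) * (-(t0 / s0))))) * (x - c) ^ (k * (q - 1)) := by ring
    _ = _ := by rw [key1, key2]; ring

/-- The characteristic polynomial (hence the eigenvalues with multiplicities) of the
`kq × kq` block matrix with diagonal blocks `c·I_q` and off-diagonal blocks `d·J_q`: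
the eigenvalues are `c + q(k-1)d`, `c - qd` and `c` with multiplicities `1`, `k-1`
and `k(q-1)` respectively. -/
theorem block_matrix_charpoly (k q : ℕ) (hk : 1 ≤ k) (hq : 1 ≤ q) (c d : ℝ) :
    (Matrix.of (fun p₁ p₂ : Fin k × Fin q =>
        if p₁.1 = p₂.1 then (if p₁.2 = p₂.2 then c else 0) else d)).charpoly
      = (X - C (c + (q : ℝ) * ((k : ℝ) - 1) * d)) *
        (X - C (c - (q : ℝ) * d)) ^ (k - 1) *
        (X - C c) ^ (k * (q - 1)) := by
  apply Polynomial.eq_of_infinite_eval_eq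
  apply Set.Infinite.mono (s := ({c, c - q * d} : Set ℝ)ᶜ)
  · intro x hx
    simp only [Set.mem_compl_iff, Set.mem_insert_iff, Set.mem_singleton_iff, not_or] at hx
    obtain ⟨hx1, hx2⟩ := hx
    have h1 : x - c ≠ 0 := sub_ne_zero.mpr hx1
    have h2 : x - c + q * d ≠ 0 := by
      intro h
      apply hx2
      linarith
    simp only [Set.mem_setOf_eq]
    rw [eval_charpoly_eq_det, det_point k q hk hq c d x h1 h2]
    simp [eval_mul, eval_pow, eval_sub, eval_X, eval_C]
  · exact ((Set.finite_singleton (c - q * d)).insert c).infinite_compl
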